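/- Let n ≥ 3 and m ≥ 2n. Then the b-chromatic number of the Kneser graph KG(m,n) satisfies χ_b(KG(m,n)) ≥ 2 · C(⌊m/2⌋, n). -/

import Mathlib

/-- The Kneser graph `KG(m,n)`. -/
def kneser (m n : ℕ) : SimpleGraph {A : Finset (Fin m) // A.card = n} where
  Adj A B := Disjoint A.1 B.1 ∧ A ≠ B
  symm := ⟨fun _ _ h => ⟨h.1.symm, h.2.symm⟩⟩
  loopless := ⟨fun _ h => h.2 rfl⟩

/-- `c` is a b-coloring of `G` with `t` colors. -/
def IsBColoring {V : Type*} (G : SimpleGraph V) (t : ℕ) (c : V → Fin t) : Prop :=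
  (∀ v w, G.Adj v w → c v ≠ c w) ∧
  (∀ i : Fin t, ∃ v, c v = i ∧ ∀ j : Fin t, j ≠ i → ∃ w, G.Adj v w ∧ c w = j)

/-- The b-chromatic number. -/
noncomputable def bChromatic {V : Type*} (G : SimpleGraph V) : ℕ :=
  sSup {t | ∃ c : V → Fin t, IsBColoring G t c}
namespace KB

variable {m n : ℕ}

def SX (m : ℕ) : Finset (Fin m) := Finset.univ.filter (fun a => (a : ℕ) < m / 2)

def xpart (A : Finset (Fin m)) : Finset (Fin m) := A.filter (fun a => (a : ℕ) < m / 2)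
def ypart (A : Finset (Fin m)) : Finset (Fin m) :=
  A.filter (fun a => m / 2 ≤ (a : ℕ) ∧ (a : ℕ) < 2 * (m / 2))
def zpart (A : Finset (Fin m)) : Finset (Fin m) := A.filter (fun a => 2 * (m / 2) ≤ (a : ℕ))

def ρ (a : Fin m) : Fin m :=
  if _ : m / 2 ≤ (a : ℕ) ∧ (a : ℕ) < 2 * (m / 2) then ⟨(a : ℕ) - m / 2, by have := a.isLt; omega⟩
  else a

def φf (a : Fin m) : Fin m :=
  if h : (a : ℕ) + m / 2 < m then ⟨(a : ℕ) + m / 2, h⟩ else a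

def φF (U : Finset (Fin m)) : Finset (Fin m) := U.image φf

def P (A : Finset (Fin m)) : Finset (Fin m) := xpart A ∪ (ypart A).image ρ
def D (A : Finset (Fin m)) : Finset (Fin m) := xpart A ∩ (ypart A).image ρ

-- basic value lemmas
lemma rho_val {a : Fin m} (h1 : m / 2 ≤ (a : ℕ)) (h2 : (a : ℕ) < 2 * (m / 2)) :
    ((ρ a : Fin m) : ℕ) = (a : ℕ) - m / 2 := by
  unfold ρ; rw [dif_pos ⟨h1, h2⟩]

lemma phf_val {a : Fin m} (h1 : (a : ℕ) < m / 2) :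
    ((φf a : Fin m) : ℕ) = (a : ℕ) + m / 2 := by
  unfold φf
  rw [dif_pos (by omega)]

lemma mem_SX {a : Fin m} : a ∈ SX m ↔ (a : ℕ) < m / 2 := by
  simp [SX]

lemma card_SX (hmm : m / 2 ≤ m) : (SX m).card = m / 2 := by
  classical
  have h : (SX m).image Fin.val = Finset.range (m / 2) := by
    ext i
    simp only [Finset.mem_image, SX, Finset.mem_filter, Finset.mem_univ, true_and,
      Finset.mem_range]
    constructor
    · rintro ⟨a, ha, rfl⟩; exact ha
    · intro hi
      exact ⟨⟨i, lt_of_lt_of_le hi hmm⟩, hi, rfl⟩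
  have hinj : Set.InjOn Fin.val ((SX m : Finset (Fin m)) : Set (Fin m)) := fun a _ b _ h => Fin.ext h
  rw [← Finset.card_image_of_injOn hinj, h, Finset.card_range]

lemma mem_xpart {A : Finset (Fin m)} {x : Fin m} :
    x ∈ xpart A ↔ x ∈ A ∧ (x : ℕ) < m / 2 := by simp [xpart]

lemma mem_ypart {A : Finset (Fin m)} {x : Fin m} :
    x ∈ ypart A ↔ x ∈ A ∧ m / 2 ≤ (x : ℕ) ∧ (x : ℕ) < 2 * (m / 2) := by simp [ypart]

lemma mem_imy {A : Finset (Fin m)} {x : Fin m} :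
    x ∈ (ypart A).image ρ ↔ (x : ℕ) < m / 2 ∧ ∃ a ∈ A, (a : ℕ) = (x : ℕ) + m / 2 := by
  simp only [Finset.mem_image, mem_ypart]
  constructor
  · rintro ⟨a, ⟨ha, h1, h2⟩, rfl⟩
    have hv := rho_val h1 h2
    exact ⟨by omega, a, ha, by omega⟩
  · rintro ⟨hx, a, ha, hav⟩
    refine ⟨a, ⟨ha, by omega, by omega⟩, ?_⟩
    apply Fin.ext
    rw [rho_val (by omega) (by omega)]
    omega

lemma mem_P {A : Finset (Fin m)} {x : Fin m} :
    x ∈ P A ↔ (x ∈ A ∧ (x : ℕ) < m / 2) ∨ ((x : ℕ) < m / 2 ∧ ∃ a ∈ A, (a : ℕ) = (x : ℕ) + m / 2) := by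
  rw [P, Finset.mem_union, mem_xpart, mem_imy]

lemma mem_D {A : Finset (Fin m)} {x : Fin m} :
    x ∈ D A ↔ (x ∈ A ∧ (x : ℕ) < m / 2) ∧ ∃ a ∈ A, (a : ℕ) = (x : ℕ) + m / 2 := by
  simp only [D, Finset.mem_inter, mem_xpart, mem_imy]
  constructor
  · rintro ⟨h1, h2⟩; exact ⟨h1, h2.2⟩
  · rintro ⟨h1, h2⟩; exact ⟨h1, h1.2, h2⟩

lemma P_subset_SX {A : Finset (Fin m)} : P A ⊆ SX m := by
  intro x hx
  rw [mem_SX]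
  rcases mem_P.1 hx with h | h
  · exact h.2
  · exact h.1

lemma injOn_rho_ypart {A : Finset (Fin m)} : Set.InjOn ρ ((ypart A : Finset (Fin m)) : Set (Fin m)) := by
  intro a ha b hb hab
  simp only [Finset.coe_filter, Set.mem_setOf_eq, ypart] at ha hb
  apply Fin.ext
  have h1 := rho_val ha.2.1 ha.2.2
  have h2 := rho_val hb.2.1 hb.2.2
  have : ((ρ a : Fin m) : ℕ) = ((ρ b : Fin m) : ℕ) := by rw [hab]
  omega



/-- z-free -/
def ZF (A : Finset (Fin m)) : Prop := ∀ a ∈ A, (a : ℕ) < 2 * (m / 2)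

lemma card_xy {A : Finset (Fin m)} (hz : ZF A) :
    (xpart A).card + (ypart A).card = A.card := by
  classical
  have hy : ypart A = A.filter (fun a : Fin m => ¬ (a : ℕ) < m / 2) := by
    apply Finset.filter_congr
    intro a ha
    have := hz a ha
    simp only [not_lt]
    exact ⟨fun h => h.1, fun h => ⟨h, by omega⟩⟩
  rw [xpart, hy]
  exact Finset.card_filter_add_card_filter_not (p := fun a : Fin m => (a : ℕ) < m / 2)

lemma card_imy {A : Finset (Fin m)} : ((ypart A).image ρ).card = (ypart A).card :=
  Finset.card_image_of_injOn injOn_rho_ypart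

lemma card_P_D {A : Finset (Fin m)} (hz : ZF A) :
    (P A).card + (D A).card = A.card := by
  rw [P, D, Finset.card_union_add_card_inter, card_imy, card_xy hz]

lemma card_P_le {A : Finset (Fin m)} (hz : ZF A) : (P A).card ≤ A.card := by
  have := card_P_D hz; omega

noncomputable def Uof (n : ℕ) (A : Finset (Fin m)) : Finset (Fin m) :=
  if hex : ∃ T, P A ⊆ T ∧ T ⊆ SX m ∧ T.card = n then hex.choose else P A

lemma Uof_spec (hn : 0 < n) (hm : 2 * n ≤ m) {A : Finset (Fin m)} (hz : ZF A) (hA : A.card ≤ n) :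
    P A ⊆ Uof n A ∧ Uof n A ⊆ SX m ∧ (Uof n A).card = n := by
  have hP : (P A).card ≤ n := le_trans (card_P_le hz) hA
  have hSX : n ≤ (SX m).card := by rw [card_SX (by omega)]; omega
  have hex : ∃ T, P A ⊆ T ∧ T ⊆ SX m ∧ T.card = n :=
    Finset.exists_subsuperset_card_eq P_subset_SX hP hSX
  rw [Uof, dif_pos hex]
  exact hex.choose_spec

lemma Uof_eq_of_spread (hn : 0 < n) (hm : 2 * n ≤ m) {A : Finset (Fin m)} (hz : ZF A) (hA : A.card ≤ n)
    (hs : (P A).card = n) : Uof n A = P A := by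
  obtain ⟨h1, h2, h3⟩ := Uof_spec hn hm hz hA
  exact (Finset.eq_of_subset_of_card_le h1 (by omega)).symm



noncomputable def dict (n : ℕ) (A : Finset (Fin m)) : Bool :=
  if h : (Uof n A).Nonempty then decide (∃ a ∈ A, (a : ℕ) = ((Uof n A).min' h : ℕ) + m / 2)
  else false

def epsk (n k : ℕ) (d : Bool) : Bool :=
  if k = 0 then true else if k = 1 then false else if k = n - 1 then true
  else if k = n then false else if 2 * k < n then true else if n < 2 * k then false else d

noncomputable def epss (n : ℕ) (A : Finset (Fin m)) : Bool :=
  epsk n (xpart A).card (dict n A)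

noncomputable def epsns (n : ℕ) (A : Finset (Fin m)) : Bool :=
  if h : (Uof n A \ (P A \ D A)).Nonempty then
    decide ((Uof n A \ (P A \ D A)).min' h ∈ P A)
  else false

noncomputable def eps (n : ℕ) (A : Finset (Fin m)) : Bool :=
  if (P A).card = n then epss n A else epsns n A

lemma epsk_e0 {k : ℕ} {d : Bool} (h : k = 0) : epsk n k d = true := by
  unfold epsk; rw [if_pos h]

lemma epsk_e1 {k : ℕ} {d : Bool} (h : k = 1) : epsk n k d = false := by
  unfold epsk; rw [if_neg (by omega), if_pos h]

lemma epsk_en1 {k : ℕ} {d : Bool} (hn : 3 ≤ n) (h : k = n - 1) : epsk n k d = true := by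
  unfold epsk; rw [if_neg (by omega), if_neg (by omega), if_pos h]

lemma epsk_en {k : ℕ} {d : Bool} (hn : 3 ≤ n) (h : k = n) : epsk n k d = false := by
  unfold epsk; rw [if_neg (by omega), if_neg (by omega), if_neg (by omega), if_pos h]

lemma epsk_elt {k : ℕ} {d : Bool} (hn : 3 ≤ n) (h2 : 2 ≤ k) (h3 : k + 2 ≤ n)
    (h : 2 * k < n) : epsk n k d = true := by
  unfold epsk
  rw [if_neg (by omega), if_neg (by omega), if_neg (by omega), if_neg (by omega), if_pos h]

lemma epsk_egt {k : ℕ} {d : Bool} (hn : 3 ≤ n) (h2 : 2 ≤ k) (h3 : k + 2 ≤ n)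
    (h : n < 2 * k) : epsk n k d = false := by
  unfold epsk
  rw [if_neg (by omega), if_neg (by omega), if_neg (by omega), if_neg (by omega),
    if_neg (by omega), if_pos h]

lemma epsk_eeq {k : ℕ} {d : Bool} (hn : 3 ≤ n) (h2 : 2 ≤ k) (h3 : k + 2 ≤ n)
    (h : 2 * k = n) : epsk n k d = d := by
  unfold epsk
  rw [if_neg (by omega), if_neg (by omega), if_neg (by omega), if_neg (by omega),
    if_neg (by omega), if_neg (by omega)]

lemma epsk_ne {k k' : ℕ} {d d' : Bool} (hn : 3 ≤ n) (hkk : k + k' = n)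
    (hd : 2 * k = n → d ≠ d') : epsk n k d ≠ epsk n k' d' := by
  rcases Nat.eq_or_lt_of_le (Nat.zero_le k) with h0 | h0
  · rw [epsk_e0 h0.symm, epsk_en hn (by omega)]; simp
  rcases Nat.eq_or_lt_of_le h0 with h1 | h1
  · rw [epsk_e1 h1.symm, epsk_en1 hn (by omega)]; simp
  rcases Nat.eq_or_lt_of_le (show k ≤ n by omega) with hkn | hkn
  · rw [epsk_en hn hkn, epsk_e0 (by omega)]; simp
  rcases Nat.eq_or_lt_of_le (show k ≤ n - 1 by omega) with hkn1 | hkn1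
  · rw [epsk_en1 hn hkn1, epsk_e1 (by omega)]; simp
  -- now 2 ≤ k ∧ k + 2 ≤ n
  have hk2 : 2 ≤ k := by omega
  have hk3 : k + 2 ≤ n := by omega
  have hk2' : 2 ≤ k' := by omega
  have hk3' : k' + 2 ≤ n := by omega
  rcases lt_trichotomy (2 * k) n with h | h | h
  · rw [epsk_elt hn hk2 hk3 h, epsk_egt hn hk2' hk3' (by omega)]; simp
  · rw [epsk_eeq hn hk2 hk3 h, epsk_eeq hn hk2' hk3' (by omega)]
    exact hd h
  · rw [epsk_egt hn hk2 hk3 h, epsk_elt hn hk2' hk3' (by omega)]; simp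



section proper
variable (hn : 3 ≤ n) (hm : 2 * n ≤ m)

lemma disj_D_P {A B : Finset (Fin m)} (hd : Disjoint A B) : Disjoint (D A) (P B) := by
  rw [Finset.disjoint_left]
  intro x hx hxB
  obtain ⟨⟨hxA, hxlt⟩, a, haA, hav⟩ := mem_D.1 hx
  rcases mem_P.1 hxB with ⟨hxB', _⟩ | ⟨_, b, hbB, hbv⟩
  · exact Finset.disjoint_left.1 hd hxA hxB'
  · have : b = a := Fin.ext (by omega)
    exact Finset.disjoint_left.1 hd haA (this ▸ hbB)

lemma D_subset_P {A : Finset (Fin m)} : D A ⊆ P A := fun _ hy =>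
  Finset.mem_union_left _ (Finset.mem_of_mem_inter_left hy)

include hn hm in
lemma key {A B : Finset (Fin m)} (hA : A.card = n) (hB : B.card = n)
    (hd : Disjoint A B) (hzA : ZF A) (hzB : ZF B) (hU : Uof n A = Uof n B) :
    D B = P B \ P A ∧ D A = P A \ P B ∧ P A ∪ P B = Uof n A ∧
      (D A).card = (D B).card := by
  obtain ⟨hPU, hUS, hUc⟩ := Uof_spec (by omega) hm hzA hA.le
  obtain ⟨hPU', hUS', hUc'⟩ := Uof_spec (by omega) hm hzB hB.le
  rw [← hU] at hPU'
  have hun : P A ∪ P B ⊆ Uof n A := Finset.union_subset hPU hPU'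
  have hcard_un : (P A ∪ P B).card ≤ n := hUc ▸ Finset.card_le_card hun
  have hsplitB : (P A ∪ P B).card = (P A).card + (P B \ P A).card := by
    rw [← Finset.union_sdiff_self_eq_union]
    exact Finset.card_union_of_disjoint Finset.disjoint_sdiff
  have hsplitA : (P A ∪ P B).card = (P B).card + (P A \ P B).card := by
    rw [Finset.union_comm, ← Finset.union_sdiff_self_eq_union]
    exact Finset.card_union_of_disjoint Finset.disjoint_sdiff
  have hDB_sub : D B ⊆ P B \ P A := fun x hx => Finset.mem_sdiff.2
    ⟨D_subset_P hx, Finset.disjoint_left.1 (disj_D_P hd.symm) hx⟩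
  have hDA_sub : D A ⊆ P A \ P B := fun x hx => Finset.mem_sdiff.2
    ⟨D_subset_P hx, Finset.disjoint_left.1 (disj_D_P hd) hx⟩
  have hPDA := card_P_D hzA
  have hPDB := card_P_D hzB
  rw [hA] at hPDA
  rw [hB] at hPDB
  have cDB := Finset.card_le_card hDB_sub
  have cDA := Finset.card_le_card hDA_sub
  have hdd : (D A).card = (D B).card := by omega
  have e1 : (P B \ P A).card ≤ (D B).card := by omega
  have e2 : (P A \ P B).card ≤ (D A).card := by omega
  have e3 : (Uof n A).card ≤ (P A ∪ P B).card := by omega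
  have hBeq : D B = P B \ P A := Finset.eq_of_subset_of_card_le hDB_sub e1
  have hAeq : D A = P A \ P B := Finset.eq_of_subset_of_card_le hDA_sub e2
  have hUeq : P A ∪ P B = Uof n A :=
    Finset.eq_of_subset_of_card_le hun e3
  exact ⟨hBeq, hAeq, hUeq, hdd⟩



include hn hm in
theorem proper {A B : Finset (Fin m)} (hA : A.card = n) (hB : B.card = n)
    (hd : Disjoint A B) (hzA : ZF A) (hzB : ZF B) (hU : Uof n A = Uof n B)
    (he : eps n A = eps n B) : False := by
  obtain ⟨hPU, hUS, hUc⟩ := Uof_spec (by omega) hm hzA hA.le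
  obtain ⟨hBeq, hAeq, hUeq, hdd⟩ := key hn hm hA hB hd hzA hzB hU
  have hPDA := card_P_D hzA
  have hPDB := card_P_D hzB
  rw [hA] at hPDA
  rw [hB] at hPDB
  by_cases hsp : (P A).card = n
  · -- spread case
    have hDA0 : (D A).card = 0 := by omega
    have hDB0 : (D B).card = 0 := by omega
    have hspB : (P B).card = n := by omega
    have hDAe : D A = (∅ : Finset (Fin m)) := Finset.card_eq_zero.1 hDA0
    have hDBe : D B = (∅ : Finset (Fin m)) := Finset.card_eq_zero.1 hDB0
    have hPAB : P A = P B := by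
      have h1 : P A ⊆ P B := by
        intro x hx
        by_contra hxB
        have : x ∈ P A \ P B := Finset.mem_sdiff.2 ⟨hx, hxB⟩
        rw [← hAeq, hDAe] at this
        exact absurd this (Finset.notMem_empty x)
      exact Finset.eq_of_subset_of_card_le h1 (by omega)
    have hPAU : P A = Uof n A := by
      rw [← hUeq, hPAB, Finset.union_self]
    -- xpart A ∪ xpart B = Uof n A, disjointly
    have hxd : Disjoint (xpart A) (xpart B) := Finset.disjoint_filter_filter hd
    have hxu : xpart A ∪ xpart B = Uof n A := by
      apply Finset.Subset.antisymm
      · apply Finset.union_subset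
        · exact fun x hx => hPU (Finset.mem_union_left _ hx)
        · intro x hx
          apply hPU
          rw [hPAB]
          exact Finset.mem_union_left _ hx
      · intro x hx
        rw [← hPAU] at hx
        rcases mem_P.1 hx with ⟨hxA, hlt⟩ | ⟨hlt, a, haA, hav⟩
        · exact Finset.mem_union_left _ (mem_xpart.2 ⟨hxA, hlt⟩)
        · have hxPB : x ∈ P B := hPAB ▸ hx
          rcases mem_P.1 hxPB with ⟨hxB, hlt'⟩ | ⟨_, b, hbB, hbv⟩
          · exact Finset.mem_union_right _ (mem_xpart.2 ⟨hxB, hlt⟩)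
          · have : b = a := Fin.ext (by omega)
            exact absurd (this ▸ hbB) (fun hh => Finset.disjoint_left.1 hd haA hh)
    have hkk : (xpart A).card + (xpart B).card = n := by
      rw [← Finset.card_union_of_disjoint hxd, hxu, hUc]
    have hUne : (Uof n A).Nonempty := Finset.card_pos.1 (by omega)
    set xh := (Uof n A).min' hUne with hxh
    have hxhU : xh ∈ Uof n A := Finset.min'_mem _ _
    have hxhlt : (xh : ℕ) < m / 2 := mem_SX.1 (hUS hxhU)
    have hdictA : dict n A = decide (∃ a ∈ A, (a : ℕ) = (xh : ℕ) + m / 2) := by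
      rw [dict, dif_pos hUne]
    have hdictB : dict n B = decide (∃ b ∈ B, (b : ℕ) = (xh : ℕ) + m / 2) := by
      have h2 : Uof n B = Uof n A := hU.symm
      rw [dict]
      simp only [h2]
      rw [dif_pos hUne]
    have hdict : dict n A ≠ dict n B := by
      have hxu' := hxhU
      rw [← hxu] at hxu'
      rcases Finset.mem_union.1 hxu' with hxa | hxb
      · obtain ⟨hxhA, _⟩ := mem_xpart.1 hxa
        have hdA : dict n A = false := by
          rw [hdictA, decide_eq_false_iff_not]
          rintro ⟨a, haA, hav⟩
          have : xh ∈ D A := mem_D.2 ⟨⟨hxhA, hxhlt⟩, a, haA, hav⟩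
          rw [hDAe] at this
          exact absurd this (Finset.notMem_empty xh)
        have hdB : dict n B = true := by
          rw [hdictB, decide_eq_true_eq]
          have hxPB : xh ∈ P B := by rw [← hPAB, hPAU]; exact hxhU
          rcases mem_P.1 hxPB with ⟨hxB, _⟩ | ⟨_, b, hbB, hbv⟩
          · exact absurd hxB (fun hh => Finset.disjoint_left.1 hd hxhA hh)
          · exact ⟨b, hbB, hbv⟩
        rw [hdA, hdB]; simp
      · obtain ⟨hxhB, _⟩ := mem_xpart.1 hxb
        have hdB : dict n B = false := by
          rw [hdictB, decide_eq_false_iff_not]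
          rintro ⟨b, hbB, hbv⟩
          have : xh ∈ D B := mem_D.2 ⟨⟨hxhB, hxhlt⟩, b, hbB, hbv⟩
          rw [hDBe] at this
          exact absurd this (Finset.notMem_empty xh)
        have hdA : dict n A = true := by
          rw [hdictA, decide_eq_true_eq]
          have hxPA : xh ∈ P A := hPAU ▸ hxhU
          rcases mem_P.1 hxPA with ⟨hxA, _⟩ | ⟨_, a, haA, hav⟩
          · exact absurd hxhB (fun hh => Finset.disjoint_left.1 hd hxA hh)
          · exact ⟨a, haA, hav⟩
        rw [hdA, hdB]; simp
    have heps : epss n A = epss n B := by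
      have h1 : eps n A = epss n A := by rw [eps, if_pos hsp]
      have h2 : eps n B = epss n B := by rw [eps, if_pos hspB]
      rw [← h1, ← h2, he]
    exact epsk_ne hn hkk (fun _ => hdict) heps
  · -- non-spread case
    have hcPA : (P A).card < n := lt_of_le_of_ne (by omega) hsp
    have hdA1 : 1 ≤ (D A).card := by omega
    have hspB : (P B).card ≠ n := by omega
    have hWA : P A \ D A = P A ∩ P B := by rw [hAeq, Finset.sdiff_sdiff_self_left]
    have hWB : P B \ D B = P A ∩ P B := by
      rw [hBeq, Finset.sdiff_sdiff_self_left, Finset.inter_comm]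
    have hWAset : Uof n A \ (P A \ D A) = Uof n A \ (P A ∩ P B) := by rw [hWA]
    have hWBset : Uof n B \ (P B \ D B) = Uof n A \ (P A ∩ P B) := by rw [hWB, ← hU]
    have hWne : (Uof n A \ (P A ∩ P B)).Nonempty := by
      obtain ⟨x, hx⟩ := Finset.card_pos.1 (show 0 < (D A).card by omega)
      refine ⟨x, Finset.mem_sdiff.2 ⟨hPU (D_subset_P hx), ?_⟩⟩
      rw [hAeq] at hx
      exact fun hh => (Finset.mem_sdiff.1 hx).2 (Finset.mem_of_mem_inter_right hh)
    set ms := (Uof n A \ (P A ∩ P B)).min' hWne with hms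
    have hmsW := Finset.min'_mem _ hWne
    have hepsA : epsns n A = decide (ms ∈ P A) := by
      rw [epsns]
      simp only [hWA]
      rw [dif_pos hWne]
    have hepsB : epsns n B = decide (ms ∈ P B) := by
      rw [epsns]
      simp only [hWB, hU.symm]
      rw [dif_pos hWne]
    have he' : decide (ms ∈ P A) = decide (ms ∈ P B) := by
      rw [← hepsA, ← hepsB]
      have h1 : eps n A = epsns n A := by rw [eps, if_neg hsp]
      have h2 : eps n B = epsns n B := by rw [eps, if_neg hspB]
      rw [← h1, ← h2, he]
    obtain ⟨hmsU, hmsni⟩ := Finset.mem_sdiff.1 hmsW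
    have hmsU2 : ms ∈ P A ∪ P B := by rw [hUeq]; exact hmsU
    rcases Finset.mem_union.1 hmsU2 with hPa | hPb
    · have hnPb : ms ∉ P B := fun hh => hmsni (Finset.mem_inter.2 ⟨hPa, hh⟩)
      rw [decide_eq_decide] at he'
      exact hnPb (he'.1 hPa)
    · have hnPa : ms ∉ P A := fun hh => hmsni (Finset.mem_inter.2 ⟨hh, hPb⟩)
      rw [decide_eq_decide] at he'
      exact hnPa (he'.2 hPb)

end proper

abbrev Color (m n : ℕ) : Type :=
  ({T : Finset (Fin m) // T ∈ (SX m).powersetCard n} × Bool) ⊕ {a : Fin m // 2 * (m / 2) ≤ (a : ℕ)}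


lemma zf_of_zpart {A : Finset (Fin m)} (hz : ¬(zpart A).Nonempty) : ZF A := by
  intro a ha
  by_contra hc
  exact hz ⟨a, Finset.mem_filter.2 ⟨ha, by omega⟩⟩

noncomputable def colf (hn : 3 ≤ n) (hm : 2 * n ≤ m) (A : Finset (Fin m)) (hA : A.card = n) :
    Color m n :=
  if hz : (zpart A).Nonempty then
    Sum.inr ⟨(zpart A).min' hz, (Finset.mem_filter.1 (Finset.min'_mem _ hz)).2⟩
  else
    Sum.inl (⟨Uof n A, by
      obtain ⟨h1, h2, h3⟩ := Uof_spec (n := n) (by omega) hm (zf_of_zpart hz) hA.le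
      exact Finset.mem_powersetCard.2 ⟨h2, h3⟩⟩, eps n A)

lemma subsing_z (hm2 : m ≤ 2 * (m / 2) + 1) (a b : {a : Fin m // 2 * (m / 2) ≤ (a : ℕ)}) :
    a = b := by
  have ha := a.2; have hb := b.2
  have ha' := a.1.isLt; have hb' := b.1.isLt
  exact Subtype.ext (Fin.ext (by omega))

lemma colf_z {A : Finset (Fin m)} (hn : 3 ≤ n) (hm : 2 * n ≤ m) (hA : A.card = n)
    (hz : (zpart A).Nonempty) (j : {a : Fin m // 2 * (m / 2) ≤ (a : ℕ)}) :
    colf hn hm A hA = Sum.inr j := by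
  rw [colf, dif_pos hz]
  congr 1
  exact subsing_z (by omega) _ j

-- pure X shape
lemma colf_pureX {U : Finset (Fin m)} (hn : 3 ≤ n) (hm : 2 * n ≤ m)
    (hUS : U ⊆ SX m) (hUc : U.card = n) (hUp : U ∈ (SX m).powersetCard n) :
    colf hn hm U hUc = Sum.inl (⟨U, hUp⟩, false) := by
  have hlt : ∀ a ∈ U, (a : ℕ) < m / 2 := fun a ha => mem_SX.1 (hUS ha)
  have hz : ¬(zpart U).Nonempty := by
    rintro ⟨a, ha⟩
    obtain ⟨haU, ha2⟩ := Finset.mem_filter.1 ha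
    have := hlt a haU
    omega
  have hx : xpart U = U := by
    apply Finset.filter_true_of_mem
    intro a ha; exact hlt a ha
  have hy : ypart U = ∅ := by
    apply Finset.filter_false_of_mem
    intro a ha
    have := hlt a ha
    omega
  have hP : P U = U := by rw [P, hx, hy, Finset.image_empty, Finset.union_empty]
  have hPc : (P U).card = n := by rw [hP, hUc]
  have hUof : Uof n U = U := by
    rw [Uof_eq_of_spread (by omega) hm (zf_of_zpart hz) hUc.le hPc, hP]
  have heps : eps n U = false := by
    rw [eps, if_pos hPc, epss, hx, hUc]
    exact epsk_en hn rfl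
  rw [colf, dif_neg hz]
  have : (⟨Uof n U, by
      obtain ⟨h1, h2, h3⟩ := Uof_spec (n := n) (by omega) hm (zf_of_zpart hz) hUc.le
      exact Finset.mem_powersetCard.2 ⟨h2, h3⟩⟩ : {T : Finset (Fin m) // T ∈ (SX m).powersetCard n})
      = ⟨U, hUp⟩ := Subtype.ext hUof
  rw [this, heps]


lemma mem_phF {U : Finset (Fin m)} (hUS : U ⊆ SX m) {b : Fin m} :
    b ∈ φF U ↔ ∃ u ∈ U, (b : ℕ) = (u : ℕ) + m / 2 := by
  simp only [φF, Finset.mem_image]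
  constructor
  · rintro ⟨u, hu, rfl⟩; exact ⟨u, hu, phf_val (mem_SX.1 (hUS hu))⟩
  · rintro ⟨u, hu, hb⟩
    refine ⟨u, hu, Fin.ext ?_⟩
    rw [phf_val (mem_SX.1 (hUS hu))]; omega

lemma card_phF {U : Finset (Fin m)} (hUS : U ⊆ SX m) : (φF U).card = U.card := by
  apply Finset.card_image_of_injOn
  intro a ha b hb hab
  have ha' := mem_SX.1 (hUS ha)
  have hb' := mem_SX.1 (hUS hb)
  have h1 := phf_val ha'
  have h2 := phf_val hb'
  have : ((φf a : Fin m) : ℕ) = ((φf b : Fin m) : ℕ) := by rw [hab]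
  exact Fin.ext (by omega)

lemma phF_range {U : Finset (Fin m)} (hUS : U ⊆ SX m) {b : Fin m} (hb : b ∈ φF U) :
    m / 2 ≤ (b : ℕ) ∧ (b : ℕ) < 2 * (m / 2) := by
  obtain ⟨u, hu, hbu⟩ := (mem_phF hUS).1 hb
  have := mem_SX.1 (hUS hu)
  omega

lemma colf_pureY {U : Finset (Fin m)} (hn : 3 ≤ n) (hm : 2 * n ≤ m)
    (hUS : U ⊆ SX m) (hUc : U.card = n) (hUp : U ∈ (SX m).powersetCard n)
    (hA : (φF U).card = n) :
    colf hn hm (φF U) hA = Sum.inl (⟨U, hUp⟩, true) := by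
  have hz : ¬(zpart (φF U)).Nonempty := by
    rintro ⟨a, ha⟩
    obtain ⟨haU, ha2⟩ := Finset.mem_filter.1 ha
    have := phF_range hUS haU
    omega
  have hx : xpart (φF U) = ∅ := by
    apply Finset.filter_false_of_mem
    intro a ha
    have := phF_range hUS ha
    omega
  have hP : P (φF U) = U := by
    ext x
    rw [mem_P]
    constructor
    · rintro (⟨hxA, hlt⟩ | ⟨hlt, a, haA, hav⟩)
      · have := phF_range hUS hxA; omega
      · obtain ⟨u, huU, hau⟩ := (mem_phF hUS).1 haA
        have : u = x := Fin.ext (by omega)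
        exact this ▸ huU
    · intro hxU
      have hxlt := mem_SX.1 (hUS hxU)
      exact Or.inr ⟨hxlt, φf x, Finset.mem_image_of_mem _ hxU, phf_val hxlt⟩
  have hPc : (P (φF U)).card = n := by rw [hP, hUc]
  have hUof : Uof n (φF U) = U := by
    rw [Uof_eq_of_spread (by omega) hm (zf_of_zpart hz) hA.le hPc, hP]
  have heps : eps n (φF U) = true := by
    rw [eps, if_pos hPc, epss, hx]
    exact epsk_e0 Finset.card_empty
  rw [colf, dif_neg hz]
  have : (⟨Uof n (φF U), by
      obtain ⟨h1, h2, h3⟩ := Uof_spec (n := n) (by omega) hm (zf_of_zpart hz) hA.le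
      exact Finset.mem_powersetCard.2 ⟨h2, h3⟩⟩ : {T : Finset (Fin m) // T ∈ (SX m).powersetCard n})
      = ⟨U, hUp⟩ := Subtype.ext hUof
  rw [this, heps]

lemma card_mix1 {U : Finset (Fin m)} {x₁ : Fin m} (hUS : U ⊆ SX m) (hUc : U.card = n)
    (hx1 : x₁ ∈ U) : (insert x₁ (φF (U.erase x₁))).card = n := by
  have hes : U.erase x₁ ⊆ SX m := fun a ha => hUS (Finset.mem_of_mem_erase ha)
  have hni : x₁ ∉ φF (U.erase x₁) := by
    intro hc
    have h1 := (phF_range hes hc).1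
    have h2 := mem_SX.1 (hUS hx1)
    omega
  rw [Finset.card_insert_of_notMem hni, card_phF hes, Finset.card_erase_of_mem hx1, hUc]
  have : 1 ≤ n := hUc ▸ Finset.card_pos.2 ⟨x₁, hx1⟩
  omega

lemma colf_mix1 {U : Finset (Fin m)} {x₁ : Fin m} (hn : 3 ≤ n) (hm : 2 * n ≤ m)
    (hUS : U ⊆ SX m) (hUc : U.card = n) (hUp : U ∈ (SX m).powersetCard n)
    (hx1 : x₁ ∈ U) (hA : (insert x₁ (φF (U.erase x₁))).card = n) :
    colf hn hm (insert x₁ (φF (U.erase x₁))) hA = Sum.inl (⟨U, hUp⟩, false) := by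
  set A := insert x₁ (φF (U.erase x₁)) with hAdef
  have hes : U.erase x₁ ⊆ SX m := fun a ha => hUS (Finset.mem_of_mem_erase ha)
  have hx1lt : (x₁ : ℕ) < m / 2 := mem_SX.1 (hUS hx1)
  have hz : ¬(zpart A).Nonempty := by
    rintro ⟨a, ha⟩
    obtain ⟨haU, ha2⟩ := Finset.mem_filter.1 ha
    rcases Finset.mem_insert.1 haU with rfl | haf
    · omega
    · have := phF_range hes haf; omega
  have hx : xpart A = {x₁} := by
    ext a
    rw [mem_xpart]
    constructor
    · rintro ⟨haA, hlt⟩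
      rcases Finset.mem_insert.1 haA with rfl | haf
      · exact Finset.mem_singleton_self _
      · have := phF_range hes haf; omega
    · intro ha
      rw [Finset.mem_singleton] at ha
      subst ha
      exact ⟨Finset.mem_insert_self _ _, hx1lt⟩
  have hP : P A = U := by
    ext x
    rw [mem_P]
    constructor
    · rintro (⟨hxA, hlt⟩ | ⟨hlt, a, haA, hav⟩)
      · rcases Finset.mem_insert.1 hxA with rfl | haf
        · exact hx1
        · have := phF_range hes haf; omega
      · rcases Finset.mem_insert.1 haA with rfl | haf
        · omega
        · obtain ⟨u, huU, hau⟩ := (mem_phF hes).1 haf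
          have : u = x := Fin.ext (by omega)
          exact Finset.mem_of_mem_erase (this ▸ huU)
    · intro hxU
      have hxlt := mem_SX.1 (hUS hxU)
      by_cases hxx : x = x₁
      · subst hxx
        exact Or.inl ⟨Finset.mem_insert_self _ _, hxlt⟩
      · refine Or.inr ⟨hxlt, φf x, ?_, phf_val hxlt⟩
        exact Finset.mem_insert_of_mem
          (Finset.mem_image_of_mem _ (Finset.mem_erase.2 ⟨hxx, hxU⟩))
  have hPc : (P A).card = n := by rw [hP, hUc]
  have hUof : Uof n A = U := by
    rw [Uof_eq_of_spread (by omega) hm (zf_of_zpart hz) hA.le hPc, hP]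
  have heps : eps n A = false := by
    rw [eps, if_pos hPc, epss, hx]
    exact epsk_e1 (Finset.card_singleton _)
  rw [colf, dif_neg hz]
  have : (⟨Uof n A, by
      obtain ⟨h1, h2, h3⟩ := Uof_spec (n := n) (by omega) hm (zf_of_zpart hz) hA.le
      exact Finset.mem_powersetCard.2 ⟨h2, h3⟩⟩ : {T : Finset (Fin m) // T ∈ (SX m).powersetCard n})
      = ⟨U, hUp⟩ := Subtype.ext hUof
  rw [this, heps]

lemma card_mixn1 {U : Finset (Fin m)} {x₁ : Fin m} (hUS : U ⊆ SX m) (hUc : U.card = n)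
    (hn : 3 ≤ n) (hx1 : x₁ ∈ U) : (insert (φf x₁) (U.erase x₁)).card = n := by
  have hx1lt : (x₁ : ℕ) < m / 2 := mem_SX.1 (hUS hx1)
  have hni : φf x₁ ∉ U.erase x₁ := by
    intro hc
    have h1 := mem_SX.1 (hUS (Finset.mem_of_mem_erase hc))
    rw [phf_val hx1lt] at h1
    omega
  rw [Finset.card_insert_of_notMem hni, Finset.card_erase_of_mem hx1, hUc]
  omega

lemma colf_mixn1 {U : Finset (Fin m)} {x₁ : Fin m} (hn : 3 ≤ n) (hm : 2 * n ≤ m)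
    (hUS : U ⊆ SX m) (hUc : U.card = n) (hUp : U ∈ (SX m).powersetCard n)
    (hx1 : x₁ ∈ U) (hA : (insert (φf x₁) (U.erase x₁)).card = n) :
    colf hn hm (insert (φf x₁) (U.erase x₁)) hA = Sum.inl (⟨U, hUp⟩, true) := by
  set A := insert (φf x₁) (U.erase x₁) with hAdef
  have hx1lt : (x₁ : ℕ) < m / 2 := mem_SX.1 (hUS hx1)
  have hphv : ((φf x₁ : Fin m) : ℕ) = (x₁ : ℕ) + m / 2 := phf_val hx1lt
  have herlt : ∀ a ∈ U.erase x₁, (a : ℕ) < m / 2 := fun a ha =>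
    mem_SX.1 (hUS (Finset.mem_of_mem_erase ha))
  have hz : ¬(zpart A).Nonempty := by
    rintro ⟨a, ha⟩
    obtain ⟨haU, ha2⟩ := Finset.mem_filter.1 ha
    rcases Finset.mem_insert.1 haU with rfl | haf
    · omega
    · have := herlt a haf; omega
  have hx : xpart A = U.erase x₁ := by
    ext a
    rw [mem_xpart]
    constructor
    · rintro ⟨haA, hlt⟩
      rcases Finset.mem_insert.1 haA with rfl | haf
      · omega
      · exact haf
    · intro ha
      exact ⟨Finset.mem_insert_of_mem ha, herlt a ha⟩
  have hP : P A = U := by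
    ext x
    rw [mem_P]
    constructor
    · rintro (⟨hxA, hlt⟩ | ⟨hlt, a, haA, hav⟩)
      · rcases Finset.mem_insert.1 hxA with rfl | haf
        · omega
        · exact Finset.mem_of_mem_erase haf
      · rcases Finset.mem_insert.1 haA with rfl | haf
        · have : x = x₁ := Fin.ext (by omega)
          exact this ▸ hx1
        · have := herlt a haf; omega
    · intro hxU
      have hxlt := mem_SX.1 (hUS hxU)
      by_cases hxx : x = x₁
      · subst hxx
        exact Or.inr ⟨hxlt, φf x, Finset.mem_insert_self _ _, hphv⟩
      · exact Or.inl ⟨Finset.mem_insert_of_mem (Finset.mem_erase.2 ⟨hxx, hxU⟩), hxlt⟩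
  have hPc : (P A).card = n := by rw [hP, hUc]
  have hUof : Uof n A = U := by
    rw [Uof_eq_of_spread (by omega) hm (zf_of_zpart hz) hA.le hPc, hP]
  have heps : eps n A = true := by
    rw [eps, if_pos hPc, epss, hx]
    apply epsk_en1 hn
    rw [Finset.card_erase_of_mem hx1, hUc]
  rw [colf, dif_neg hz]
  have : (⟨Uof n A, by
      obtain ⟨h1, h2, h3⟩ := Uof_spec (n := n) (by omega) hm (zf_of_zpart hz) hA.le
      exact Finset.mem_powersetCard.2 ⟨h2, h3⟩⟩ : {T : Finset (Fin m) // T ∈ (SX m).powersetCard n})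
      = ⟨U, hUp⟩ := Subtype.ext hUof
  rw [this, heps]


lemma card_color (hn : 3 ≤ n) (hm : 2 * n ≤ m) :
    Fintype.card (Color m n) = 2 * ((m / 2).choose n) + (m - 2 * (m / 2)) := by
  rw [Fintype.card_sum, Fintype.card_prod, Fintype.card_bool]
  congr 1
  · rw [Fintype.card_coe, Finset.card_powersetCard, card_SX (by omega)]
    ring
  · rw [Fintype.card_subtype]
    have h : (Finset.univ.filter (fun a : Fin m => 2 * (m / 2) ≤ (a : ℕ))).image Fin.val
        = Finset.Ico (2 * (m / 2)) m := by
      ext i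
      simp only [Finset.mem_image, Finset.mem_filter, Finset.mem_univ, true_and,
        Finset.mem_Ico]
      constructor
      · rintro ⟨a, ha, rfl⟩; exact ⟨ha, a.isLt⟩
      · rintro ⟨h1, h2⟩; exact ⟨⟨i, h2⟩, h1, rfl⟩
    have hinj : Set.InjOn Fin.val
        ((Finset.univ.filter (fun a : Fin m => 2 * (m / 2) ≤ (a : ℕ)) : Finset (Fin m)) :
          Set (Fin m)) := fun a _ b _ hab => Fin.ext hab
    rw [← Finset.card_image_of_injOn hinj, h, Nat.card_Ico]

lemma kadj (hn : 3 ≤ n) {v w : {A : Finset (Fin m) // A.card = n}} (hd : Disjoint v.1 w.1) :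
    (kneser m n).Adj v w := by
  show Disjoint v.1 w.1 ∧ v ≠ w
  refine ⟨hd, fun he => ?_⟩
  subst he
  rw [disjoint_self] at hd
  have := v.2
  rw [hd] at this
  simp at this
  omega


theorem bcol (hn : 3 ≤ n) (hm : 2 * n ≤ m) :
    IsBColoring (kneser m n) (2 * ((m / 2).choose n) + (m - 2 * (m / 2)))
      (fun A => (Fintype.equivFinOfCardEq (card_color hn hm)) (colf hn hm A.1 A.2)) := by
  obtain ⟨K₀, hK₀S, hK₀c⟩ : ∃ K ⊆ SX m, K.card = n - 1 :=
    Finset.exists_subset_card_eq (by rw [card_SX (by omega)]; omega)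
  have hK₀lt : ∀ a ∈ K₀, (a : ℕ) < m / 2 := fun a ha => mem_SX.1 (hK₀S ha)
  set E := Fintype.equivFinOfCardEq (card_color hn hm) with hE
  constructor
  · -- properness
    rintro v w (⟨hdisj, hne⟩ : Disjoint v.1 w.1 ∧ v ≠ w) hc
    have hc' : colf hn hm v.1 v.2 = colf hn hm w.1 w.2 := E.injective hc
    by_cases hzv : (zpart v.1).Nonempty
    · by_cases hzw : (zpart w.1).Nonempty
      · obtain ⟨a, ha⟩ := hzv
        obtain ⟨b, hb⟩ := hzw
        obtain ⟨haA, ha2⟩ := Finset.mem_filter.1 ha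
        obtain ⟨hbB, hb2⟩ := Finset.mem_filter.1 hb
        have hab : a = b := Fin.ext (by have := a.isLt; have := b.isLt; omega)
        exact Finset.disjoint_left.1 hdisj haA (hab ▸ hbB)
      · rw [colf, dif_pos hzv, colf, dif_neg hzw] at hc'
        exact absurd hc' (by simp)
    · by_cases hzw : (zpart w.1).Nonempty
      · rw [colf, dif_neg hzv, colf, dif_pos hzw] at hc'
        exact absurd hc' (by simp)
      · rw [colf, dif_neg hzv, colf, dif_neg hzw] at hc'
        simp only [Sum.inl.injEq, Prod.mk.injEq, Subtype.mk.injEq] at hc'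
        exact proper hn hm v.2 w.2 hdisj (zf_of_zpart hzv) (zf_of_zpart hzw) hc'.1 hc'.2
  · -- b-vertices
    intro i
    have hEcol : E (E.symm i) = i := E.apply_symm_apply i
    rcases hcol : E.symm i with ⟨⟨U, hUp⟩, e⟩ | j
    all_goals rw [hcol] at hEcol
    · obtain ⟨hUS2, hUc⟩ := Finset.mem_powersetCard.1 hUp
      -- helper for neighbors, shared by both e cases
      cases e with
      | false =>
        refine ⟨⟨U, hUc⟩, ?_, ?_⟩
        · show E (colf hn hm U hUc) = i
          rw [colf_pureX hn hm hUS2 hUc hUp, hEcol]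
        · intro j' hj'
          have hEj' : E (E.symm j') = j' := E.apply_symm_apply j'
          have hne' : E.symm j' ≠ Sum.inl (⟨U, hUp⟩, false) := by
            intro h
            apply hj'
            rw [← hEj', h, hEcol]
          rcases hcol' : E.symm j' with ⟨⟨U', hUp'⟩, e'⟩ | j''
          all_goals rw [hcol'] at hEj' hne'
          · obtain ⟨hUS2', hUc'⟩ := Finset.mem_powersetCard.1 hUp'
            cases e' with
            | true =>
              refine ⟨⟨φF U', by rw [card_phF hUS2', hUc']⟩, kadj hn ?_, ?_⟩
              · rw [Finset.disjoint_left]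
                intro a ha hb
                have h1 := mem_SX.1 (hUS2 ha)
                have h2 := (phF_range hUS2' hb).1
                omega
              · show E (colf hn hm (φF U') _) = j'
                rw [colf_pureY hn hm hUS2' hUc' hUp', hEj']
            | false =>
              have hUne : U' ≠ U := by
                intro h
                apply hne'
                subst h
                rfl
              have hsd : (U' \ U).Nonempty := by
                rw [Finset.sdiff_nonempty]
                intro hsub
                exact hUne (Finset.eq_of_subset_of_card_le hsub (by omega))
              obtain ⟨x₁, hx₁⟩ := hsd
              obtain ⟨hx₁U', hx₁U⟩ := Finset.mem_sdiff.1 hx₁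
              refine ⟨⟨insert x₁ (φF (U'.erase x₁)), card_mix1 hUS2' hUc' hx₁U'⟩,
                kadj hn ?_, ?_⟩
              · rw [Finset.disjoint_left]
                intro a ha hb
                rcases Finset.mem_insert.1 hb with rfl | hbf
                · exact hx₁U ha
                · have h1 := mem_SX.1 (hUS2 ha)
                  have h2 := (phF_range (fun b hb2 => hUS2' (Finset.mem_of_mem_erase hb2)) hbf).1
                  omega
              · show E (colf hn hm (insert x₁ (φF (U'.erase x₁))) _) = j'
                rw [colf_mix1 hn hm hUS2' hUc' hUp' hx₁U', hEj']
          · -- z-target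
            have hzval : 2 * (m / 2) ≤ (j''.1 : ℕ) := j''.2
            have hjne : (j''.1 : Fin m) ∉ φF K₀ := by
              intro hc2
              have := (phF_range hK₀S hc2).2
              omega
            have hwc : (insert j''.1 (φF K₀)).card = n := by
              rw [Finset.card_insert_of_notMem hjne, card_phF hK₀S, hK₀c]
              omega
            refine ⟨⟨insert j''.1 (φF K₀), hwc⟩, kadj hn ?_, ?_⟩
            · rw [Finset.disjoint_left]
              intro a ha hb
              have h1 := mem_SX.1 (hUS2 ha)
              rcases Finset.mem_insert.1 hb with rfl | hbf
              · omega
              · have h2 := (phF_range hK₀S hbf).1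
                omega
            · show E (colf hn hm (insert j''.1 (φF K₀)) _) = j'
              rw [colf_z hn hm hwc ⟨j''.1, Finset.mem_filter.2
                ⟨Finset.mem_insert_self _ _, hzval⟩⟩ j'', hEj']
      | true =>
        refine ⟨⟨φF U, by rw [card_phF hUS2, hUc]⟩, ?_, ?_⟩
        · show E (colf hn hm (φF U) _) = i
          rw [colf_pureY hn hm hUS2 hUc hUp, hEcol]
        · intro j' hj'
          have hEj' : E (E.symm j') = j' := E.apply_symm_apply j'
          have hne' : E.symm j' ≠ Sum.inl (⟨U, hUp⟩, true) := by
            intro h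
            apply hj'
            rw [← hEj', h, hEcol]
          rcases hcol' : E.symm j' with ⟨⟨U', hUp'⟩, e'⟩ | j''
          all_goals rw [hcol'] at hEj' hne'
          · obtain ⟨hUS2', hUc'⟩ := Finset.mem_powersetCard.1 hUp'
            cases e' with
            | false =>
              refine ⟨⟨U', hUc'⟩, kadj hn ?_, ?_⟩
              · rw [Finset.disjoint_left]
                intro a ha hb
                have h1 := (phF_range hUS2 ha).1
                have h2 := mem_SX.1 (hUS2' hb)
                omega
              · show E (colf hn hm U' _) = j'
                rw [colf_pureX hn hm hUS2' hUc' hUp', hEj']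
            | true =>
              have hUne : U' ≠ U := by
                intro h
                apply hne'
                subst h
                rfl
              have hsd : (U' \ U).Nonempty := by
                rw [Finset.sdiff_nonempty]
                intro hsub
                exact hUne (Finset.eq_of_subset_of_card_le hsub (by omega))
              obtain ⟨x₁, hx₁⟩ := hsd
              obtain ⟨hx₁U', hx₁U⟩ := Finset.mem_sdiff.1 hx₁
              have hx₁lt : (x₁ : ℕ) < m / 2 := mem_SX.1 (hUS2' hx₁U')
              refine ⟨⟨insert (φf x₁) (U'.erase x₁), card_mixn1 hUS2' hUc' hn hx₁U'⟩,
                kadj hn ?_, ?_⟩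
              · rw [Finset.disjoint_left]
                intro a ha hb
                rcases Finset.mem_insert.1 hb with rfl | hbf
                · obtain ⟨u, hu, hau⟩ := (mem_phF hUS2).1 ha
                  have hv := phf_val hx₁lt
                  have : u = x₁ := Fin.ext (by omega)
                  exact hx₁U (this ▸ hu)
                · have h1 := (phF_range hUS2 ha).1
                  have h2 := mem_SX.1 (hUS2' (Finset.mem_of_mem_erase hbf))
                  omega
              · show E (colf hn hm (insert (φf x₁) (U'.erase x₁)) _) = j'
                rw [colf_mixn1 hn hm hUS2' hUc' hUp' hx₁U', hEj']
          · -- z-target with pure X + z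
            have hzval : 2 * (m / 2) ≤ (j''.1 : ℕ) := j''.2
            have hjne : (j''.1 : Fin m) ∉ K₀ := by
              intro hc2
              have := hK₀lt _ hc2
              omega
            have hwc : (insert j''.1 K₀).card = n := by
              rw [Finset.card_insert_of_notMem hjne, hK₀c]
              omega
            refine ⟨⟨insert j''.1 K₀, hwc⟩, kadj hn ?_, ?_⟩
            · rw [Finset.disjoint_left]
              intro a ha hb
              have h1 := (phF_range hUS2 ha)
              rcases Finset.mem_insert.1 hb with rfl | hbf
              · omega
              · have h2 := hK₀lt _ hbf
                omega
            · show E (colf hn hm (insert j''.1 K₀) _) = j'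
              rw [colf_z hn hm hwc ⟨j''.1, Finset.mem_filter.2
                ⟨Finset.mem_insert_self _ _, hzval⟩⟩ j'', hEj']
    · -- b-vertex for the z class
      have hzval : 2 * (m / 2) ≤ (j.1 : ℕ) := j.2
      have hjne : (j.1 : Fin m) ∉ K₀ := by
        intro hc2
        have := hK₀lt _ hc2
        omega
      have hvc : (insert j.1 K₀).card = n := by
        rw [Finset.card_insert_of_notMem hjne, hK₀c]
        omega
      refine ⟨⟨insert j.1 K₀, hvc⟩, ?_, ?_⟩
      · show E (colf hn hm (insert j.1 K₀) _) = i
        rw [colf_z hn hm hvc ⟨j.1, Finset.mem_filter.2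
          ⟨Finset.mem_insert_self _ _, hzval⟩⟩ j, hEcol]
      · intro j' hj'
        have hEj' : E (E.symm j') = j' := E.apply_symm_apply j'
        have hne' : E.symm j' ≠ Sum.inr j := by
          intro h
          apply hj'
          rw [← hEj', h, hEcol]
        rcases hcol' : E.symm j' with ⟨⟨U', hUp'⟩, e'⟩ | j''
        all_goals rw [hcol'] at hEj' hne'
        · obtain ⟨hUS2', hUc'⟩ := Finset.mem_powersetCard.1 hUp'
          cases e' with
          | true =>
            refine ⟨⟨φF U', by rw [card_phF hUS2', hUc']⟩, kadj hn ?_, ?_⟩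
            · rw [Finset.disjoint_left]
              intro a ha hb
              have h2 := phF_range hUS2' hb
              rcases Finset.mem_insert.1 ha with rfl | haf
              · omega
              · have h1 := hK₀lt _ haf
                omega
            · show E (colf hn hm (φF U') _) = j'
              rw [colf_pureY hn hm hUS2' hUc' hUp', hEj']
          | false =>
            have hsd : (U' \ K₀).Nonempty := by
              rw [Finset.sdiff_nonempty]
              intro hsub
              have := Finset.card_le_card hsub
              omega
            obtain ⟨x₁, hx₁⟩ := hsd
            obtain ⟨hx₁U', hx₁K⟩ := Finset.mem_sdiff.1 hx₁
            refine ⟨⟨insert x₁ (φF (U'.erase x₁)), card_mix1 hUS2' hUc' hx₁U'⟩,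
              kadj hn ?_, ?_⟩
            · rw [Finset.disjoint_left]
              intro a ha hb
              rcases Finset.mem_insert.1 ha with rfl | haf
              · rcases Finset.mem_insert.1 hb with rfl | hbf
                · have := mem_SX.1 (hUS2' hx₁U')
                  omega
                · have h2 := (phF_range (fun b hb2 => hUS2' (Finset.mem_of_mem_erase hb2)) hbf).2
                  omega
              · have h1 := hK₀lt _ haf
                rcases Finset.mem_insert.1 hb with rfl | hbf
                · exact hx₁K haf
                · have h2 := (phF_range (fun b hb2 => hUS2' (Finset.mem_of_mem_erase hb2)) hbf).1
                  omega
            · show E (colf hn hm (insert x₁ (φF (U'.erase x₁))) _) = j'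
              rw [colf_mix1 hn hm hUS2' hUc' hUp' hx₁U', hEj']
        · exact absurd (by rw [subsing_z (by omega) j'' j]) hne'


end KB

/-- for `n ≥ 3` and `m ≥ 2n`, `χ_b(KG(m,n)) ≥ 2·C(⌊m/2⌋, n)`. -/
theorem stmt5 (m n : ℕ) (hn : 3 ≤ n) (hm : 2 * n ≤ m) :
    2 * (m / 2).choose n ≤ bChromatic (kneser m n) := by
  have hbdd : BddAbove {t | ∃ c : {A : Finset (Fin m) // A.card = n} → Fin t,
      IsBColoring (kneser m n) t c} := by
    refine ⟨Fintype.card {A : Finset (Fin m) // A.card = n}, ?_⟩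
    rintro tt ⟨c, hc⟩
    have hsurj : Function.Surjective c := fun i => ⟨(hc.2 i).choose, (hc.2 i).choose_spec.1⟩
    have h2 := Fintype.card_le_of_surjective c hsurj
    rwa [Fintype.card_fin] at h2
  have hmem : 2 * ((m / 2).choose n) + (m - 2 * (m / 2)) ∈ {t | ∃ c :
      {A : Finset (Fin m) // A.card = n} → Fin t, IsBColoring (kneser m n) t c} :=
    ⟨_, KB.bcol hn hm⟩
  calc 2 * (m / 2).choose n
      ≤ 2 * ((m / 2).choose n) + (m - 2 * (m / 2)) := Nat.le_add_right _ _
    _ ≤ bChromatic (kneser m n) := le_csSup hbdd hmem
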